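/- Let μ be a measure, 1 ≤ p < ∞, σ > 1, C_S > 0, and suppose (B_j)_{j≥1} is a decreasing sequence of measurable sets contained in a set B* with 0 < μ(B*) < ∞, satisfying (μ(B_{j+1})/μ(B*))^{1/(pσ)} ≤ C_S·2^{j+4}·(μ(B_j)/μ(B*))^{1/p} for all j ≥ 1. If additionally there exist constants 0 < a ≤ μ(B_j) for all j, then μ(B*) ≤ C_S^{pσ/(σ-1)} · K₁(σ,p) · μ(B_1), where K₁(σ,p) := exp(σp·(∑_{j=1}^∞ (j+4)/σ^j)·log 2). -/

import Mathlib

open MeasureTheory Real Filter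

theorem stmt11 {X : Type*} [MeasurableSpace X] (μ : Measure X)
    (p σ C_S a : ℝ) (hp : 1 ≤ p) (hσ : 1 < σ) (hC : 0 < C_S) (ha : 0 < a)
    (Bstar : Set X) (B : ℕ → Set X)
    (hmeas : ∀ j, MeasurableSet (B j)) (hBstarm : MeasurableSet Bstar)
    (hdec : ∀ j, B (j + 1) ⊆ B j) (hsub : ∀ j, B j ⊆ Bstar)
    (hpos : 0 < μ Bstar) (hfin : μ Bstar < ⊤)
    (hlb : ∀ j, 1 ≤ j → a ≤ (μ (B j)).toReal)
    (hiter : ∀ j : ℕ, 1 ≤ j →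
      ((μ (B (j + 1))).toReal / (μ Bstar).toReal) ^ (1 / (p * σ)) ≤
        C_S * 2 ^ (j + 4) * ((μ (B j)).toReal / (μ Bstar).toReal) ^ (1 / p)) :
    (μ Bstar).toReal ≤ C_S ^ (p * σ / (σ - 1)) *
      Real.exp (σ * p * (∑' j : ℕ, ((j : ℝ) + 1 + 4) / σ ^ (j + 1)) * Real.log 2) *
      (μ (B 1)).toReal := by
  have hp0 : 0 < p := lt_of_lt_of_le one_pos hp
  have hσ0 : 0 < σ := lt_trans one_pos hσ
  have hσ1 : σ - 1 ≠ 0 := by nlinarith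
  have hpσ : 0 < p * σ := mul_pos hp0 hσ0
  set M := (μ Bstar).toReal with hMdef
  have hM : 0 < M := ENNReal.toReal_pos hpos.ne' hfin.ne
  have hbpos : ∀ j, 1 ≤ j → 0 < (μ (B j)).toReal :=
    fun j hj => lt_of_lt_of_le ha (hlb j hj)
  set m : ℕ → ℝ := fun k => (μ (B k)).toReal / M with hmdef
  have hmpos : ∀ k, 1 ≤ k → 0 < m k := fun k hk => div_pos (hbpos k hk) hM
  set u : ℕ → ℝ := fun j => Real.log (m (j + 1)) with hudef
  set d : ℕ → ℝ := fun j =>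
    p * σ * Real.log C_S + σ * p * ((j : ℝ) + 5) * Real.log 2 with hddef
  -- the recurrence in log form
  have hrec : ∀ j : ℕ, u (j + 1) ≤ d j + σ * u j := by
    intro j
    have h := hiter (j + 1) (by omega)
    have hm1 : 0 < m (j + 1) := hmpos _ (by omega)
    have hm2 : 0 < m (j + 2) := hmpos _ (by omega)
    have hL : (0:ℝ) < m (j + 2) ^ (1 / (p * σ)) := Real.rpow_pos_of_pos hm2 _
    have hlog : Real.log (m (j + 2) ^ (1 / (p * σ))) ≤
        Real.log (C_S * 2 ^ (j + 1 + 4) * m (j + 1) ^ (1 / p)) := by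
      apply Real.log_le_log hL
      simpa [hmdef] using h
    rw [Real.log_rpow hm2, Real.log_mul (by positivity) (by positivity),
      Real.log_mul hC.ne' (by positivity), Real.log_pow, Real.log_rpow hm1] at hlog
    have h2 := mul_le_mul_of_nonneg_left hlog hpσ.le
    have e1 : p * σ * (1 / (p * σ) * Real.log (m (j + 2))) = Real.log (m (j + 2)) := by
      field_simp
    have e2 : p * σ * (Real.log C_S + (↑(j + 1 + 4) : ℝ) * Real.log 2
        + 1 / p * Real.log (m (j + 1)))
        = p * σ * Real.log C_S + σ * p * ((j : ℝ) + 5) * Real.log 2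
          + σ * Real.log (m (j + 1)) := by
      push_cast
      field_simp
      ring
    rw [e1, e2] at h2
    simpa [hudef, hddef, add_assoc] using h2
  -- iterate the recurrence
  have hkey : ∀ n : ℕ,
      u n ≤ σ ^ n * (u 0 + ∑ j ∈ Finset.range n, d j / σ ^ (j + 1)) := by
    intro n
    induction n with
    | zero => simp
    | succ n ih =>
      have hσn : (0:ℝ) < σ ^ (n + 1) := pow_pos hσ0 _
      calc u (n + 1) ≤ d n + σ * u n := hrec n
        _ ≤ d n + σ * (σ ^ n * (u 0 + ∑ j ∈ Finset.range n, d j / σ ^ (j + 1))) := by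
            have := mul_le_mul_of_nonneg_left ih hσ0.le
            linarith
        _ = σ ^ (n + 1) * (u 0 + ∑ j ∈ Finset.range (n + 1), d j / σ ^ (j + 1)) := by
            rw [Finset.sum_range_succ]
            have : σ ^ (n + 1) ≠ 0 := hσn.ne'
            field_simp
            ring
  -- lower bound on u
  have hlow : ∀ n : ℕ, Real.log (a / M) ≤ u n := by
    intro n
    apply Real.log_le_log (div_pos ha hM)
    have := hlb (n + 1) (by omega)
    simp only [hmdef]
    gcongr
  -- summability
  set r : ℝ := 1 / σ with hrdef
  have hr0 : 0 < r := by positivity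
  have hr1 : r < 1 := by rw [hrdef, div_lt_one hσ0]; exact hσ
  have hgeom : Summable (fun j : ℕ => r ^ j) := summable_geometric_of_lt_one hr0.le hr1
  have hsj : Summable (fun j : ℕ => (j : ℝ) * r ^ j) := by
    simpa using summable_pow_mul_geometric_of_norm_lt_one 1
      (r := r) (by rw [Real.norm_eq_abs, abs_of_pos hr0]; exact hr1)
  have hpow : ∀ j : ℕ, r ^ (j + 1) = 1 / σ ^ (j + 1) := by
    intro j; rw [hrdef, div_pow, one_pow]
  have hs2eq : ∀ j : ℕ, ((j : ℝ) + 1 + 4) / σ ^ (j + 1)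
      = ((j : ℝ) * r ^ j + 5 * r ^ j) * r := by
    intro j
    have hσn : σ ^ j ≠ 0 := (pow_pos hσ0 j).ne'
    rw [hrdef, div_pow, one_pow]
    field_simp
    ring
  have hs2 : Summable (fun j : ℕ => ((j : ℝ) + 1 + 4) / σ ^ (j + 1)) := by
    apply Summable.congr (((hsj.add (hgeom.mul_left 5)).mul_right r)) 
    intro j; rw [hs2eq j]
  have hs1 : Summable (fun j : ℕ => r ^ (j + 1)) := by
    apply Summable.congr (hgeom.mul_right r)
    intro j; rw [pow_succ]
  have hdeq : ∀ j : ℕ, d j / σ ^ (j + 1)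
      = (p * σ * Real.log C_S) * r ^ (j + 1)
        + (σ * p * Real.log 2) * (((j : ℝ) + 1 + 4) / σ ^ (j + 1)) := by
    intro j
    rw [hpow j, hddef]
    have hσn : σ ^ (j + 1) ≠ 0 := (pow_pos hσ0 _).ne'
    field_simp
    ring
  have hsd : Summable (fun j : ℕ => d j / σ ^ (j + 1)) := by
    apply Summable.congr ((hs1.mul_left (p * σ * Real.log C_S)).add
      (hs2.mul_left (σ * p * Real.log 2)))
    intro j; rw [hdeq j]
  set S : ℝ := ∑' j : ℕ, ((j : ℝ) + 1 + 4) / σ ^ (j + 1) with hSdef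
  have hT1 : (∑' j : ℕ, r ^ (j + 1)) = 1 / (σ - 1) := by
    have : (fun j : ℕ => r ^ (j + 1)) = fun j : ℕ => r ^ j * r := by
      funext j; rw [pow_succ]
    rw [this, tsum_mul_right, tsum_geometric_of_lt_one hr0.le hr1, hrdef]
    field_simp
  have hD : (∑' j : ℕ, d j / σ ^ (j + 1))
      = (p * σ * Real.log C_S) * (1 / (σ - 1)) + (σ * p * Real.log 2) * S := by
    calc (∑' j : ℕ, d j / σ ^ (j + 1))
        = ∑' j : ℕ, ((p * σ * Real.log C_S) * r ^ (j + 1)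
            + (σ * p * Real.log 2) * (((j : ℝ) + 1 + 4) / σ ^ (j + 1))) := by
          exact tsum_congr hdeq
      _ = (p * σ * Real.log C_S) * (∑' j : ℕ, r ^ (j + 1))
          + (σ * p * Real.log 2) * S := by
          rw [Summable.tsum_add (hs1.mul_left _) (hs2.mul_left _), tsum_mul_left, tsum_mul_left]
      _ = _ := by rw [hT1]
  set D : ℝ := ∑' j : ℕ, d j / σ ^ (j + 1) with hDdef
  -- limit argument
  have hVtend : Tendsto (fun n : ℕ => u 0 + ∑ j ∈ Finset.range n, d j / σ ^ (j + 1))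
      atTop (nhds (u 0 + D)) := by
    exact (hsd.hasSum.tendsto_sum_nat).const_add _
  have hLtend : Tendsto (fun n : ℕ => Real.log (a / M) * r ^ n) atTop (nhds 0) := by
    have := (tendsto_pow_atTop_nhds_zero_of_lt_one hr0.le hr1).const_mul (Real.log (a / M))
    simpa using this
  have hptwise : ∀ n : ℕ, Real.log (a / M) * r ^ n
      ≤ u 0 + ∑ j ∈ Finset.range n, d j / σ ^ (j + 1) := by
    intro n
    have hσn : (0:ℝ) < σ ^ n := pow_pos hσ0 n
    have h1 : Real.log (a / M) ≤ σ ^ n * (u 0 + ∑ j ∈ Finset.range n, d j / σ ^ (j + 1)) :=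
      le_trans (hlow n) (hkey n)
    have hrn : Real.log (a / M) * r ^ n = Real.log (a / M) / σ ^ n := by
      rw [hrdef, div_pow, one_pow, mul_one_div]
    rw [hrn, div_le_iff₀ hσn]
    linarith [h1]
  have hfinal : 0 ≤ u 0 + D := le_of_tendsto_of_tendsto' hLtend hVtend hptwise
  -- unfold and conclude
  have hb1 : 0 < (μ (B 1)).toReal := hbpos 1 le_rfl
  have hu0 : u 0 = Real.log (μ (B 1)).toReal - Real.log M := by
    simp only [hudef, hmdef]
    rw [Real.log_div hb1.ne' hM.ne']
  have hlogM : Real.log M ≤ Real.log (μ (B 1)).toReal + D := by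
    rw [hu0] at hfinal; linarith
  have hMle : M ≤ Real.exp (Real.log (μ (B 1)).toReal + D) := by
    calc M = Real.exp (Real.log M) := (Real.exp_log hM).symm
      _ ≤ _ := Real.exp_le_exp.mpr hlogM
  calc M ≤ Real.exp (Real.log (μ (B 1)).toReal + D) := hMle
    _ = Real.exp D * (μ (B 1)).toReal := by
        rw [Real.exp_add, Real.exp_log hb1]; ring
    _ = C_S ^ (p * σ / (σ - 1)) * Real.exp (σ * p * S * Real.log 2) * (μ (B 1)).toReal := by
        rw [hD, Real.rpow_def_of_pos hC, ← Real.exp_add]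
        congr 1
        field_simp
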